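/- Let {(X_j, R_j, μ_j) : j ∈ ℕ} be a sequence of bounded K-valued measure spaces, X := ∏_{j∈ℕ} X_j, R the ring of cylinder sets of X, and μ the product cylindrical distribution on R given by μ(⋂_{l=1}^{n} π_{j_l}⁻¹(A_l)) = ∏_{l=1}^{n} μ_{j_l}(A_l). If ∏_{j=1}^{∞} ‖X_j‖_{μ_j} = 0, then N_μ(x) = 0 for every x ∈ X, so sup_{x∈X} N_μ(x) = 0; and if ∏_{j=1}^{∞} ‖X_j‖_{μ_j} = ∞, then sup_{A∈R} ‖A‖_μ = ∞, i.e. the cylindrical distribution is unbounded on X. -/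

import Mathlib

open Set ENNReal

namespace NonArch

variable {X Y : Type*} {K : Type*}

/-- A covering ring of subsets of `X`: a ring of subsets whose elements cover `X`. -/
structure IsCoveringRing (R : Set (Set X)) : Prop where
  union_mem : ∀ ⦃A B : Set X⦄, A ∈ R → B ∈ R → A ∪ B ∈ R
  inter_mem : ∀ ⦃A B : Set X⦄, A ∈ R → B ∈ R → A ∩ B ∈ R
  diff_mem : ∀ ⦃A B : Set X⦄, A ∈ R → B ∈ R → A \ B ∈ R
  covers : ∀ x : X, ∃ A ∈ R, x ∈ A

/-- `S` is a shrinking subfamily of `R`. -/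
def IsShrinking (R S : Set (Set X)) : Prop :=
  S ⊆ R ∧ ∀ ⦃A⦄, A ∈ S → ∀ ⦃B⦄, B ∈ S → ∃ C ∈ S, C ⊆ A ∩ B

/-- `lim_{A ∈ S} f A = 0` for a real-valued set function. -/
def TendstoZeroOn (S : Set (Set X)) (f : Set X → ℝ) : Prop :=
  ∀ ε : ℝ, 0 < ε → ∃ B ∈ S, ∀ A ∈ S, A ⊆ B → |f A| ≤ ε

section Measure

variable [NormedField K]

/-- The `μ`-norm `‖A‖_μ := sup{|μ B| : B ∈ R, B ⊆ A}`, as an extended nonnegative real. -/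
noncomputable def mnorm (R : Set (Set X)) (μ : Set X → K) (A : Set X) : ℝ≥0∞ :=
  ⨆ (B : Set X) (_ : B ∈ R ∧ B ⊆ A), (‖μ B‖₊ : ℝ≥0∞)

/-- `N_μ x := inf {‖U‖_μ : x ∈ U ∈ R}`. -/
noncomputable def Nmu (R : Set (Set X)) (μ : Set X → K) (x : X) : ℝ≥0∞ :=
  ⨅ (U : Set X) (_ : U ∈ R ∧ x ∈ U), mnorm R μ U

/-- A `K`-valued measure on `(X, R)`: finitely additive, bounded and continuous with
respect to shrinking families with empty intersection. -/
structure IsMeasure (R : Set (Set X)) (μ : Set X → K) : Prop where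
  additive : ∀ ⦃A⦄, A ∈ R → ∀ ⦃B⦄, B ∈ R → Disjoint A B → μ (A ∪ B) = μ A + μ B
  bounded : ∀ ⦃A⦄, A ∈ R → mnorm R μ A < ⊤
  shrink_cont : ∀ S : Set (Set X), IsShrinking R S → ⋂₀ S = ∅ →
    TendstoZeroOn S fun A => ‖μ A‖

/-- A probability `K`-valued measure on `(X, R)`. -/
structure IsProbability (R : Set (Set X)) (μ : Set X → K) : Prop where
  toIsMeasure : IsMeasure R μ
  univ_mem : Set.univ ∈ R
  measure_univ : μ Set.univ = 1
  mnorm_univ : mnorm R μ Set.univ = 1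

/-- An `R`-step function: a finite `K`-linear combination of characteristic functions
of members of `R`. -/
def IsStep (R : Set (Set X)) (f : X → K) : Prop :=
  ∃ (n : ℕ) (c : Fin n → K) (A : Fin n → Set X),
    (∀ i, A i ∈ R) ∧ ∀ x, f x = ∑ i, c i * (A i).indicator 1 x

/-- The norm `‖f‖_{N_μ} := sup_x ‖f x‖ N_μ(x)`. -/
noncomputable def fnorm (R : Set (Set X)) (μ : Set X → K) (f : X → K) : ℝ≥0∞ :=
  ⨆ x : X, (‖f x‖₊ : ℝ≥0∞) * Nmu R μ x

/-- The completion `R_μ` of `R` relative to `μ`: those subsets whose characteristic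
functions are `‖·‖_{N_μ}`-limits of `R`-step functions. -/
def completion (R : Set (Set X)) (μ : Set X → K) : Set (Set X) :=
  {A | ∀ ε : ℝ≥0∞, 0 < ε → ∃ f : X → K, IsStep R f ∧
    fnorm R μ (fun x => A.indicator 1 x - f x) ≤ ε}

end Measure

end NonArch

namespace NonArch

open Filter

/-- The ring of cylinder subsets of a product `∏ j, X j`. -/
def cylinderRing {ι : Type*} {X : ι → Type*} (R : ∀ j, Set (Set (X j))) :
    Set (Set (∀ j, X j)) :=
  {C | ∃ (n : ℕ) (t : Fin n → ι), Function.Injective t ∧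
    ∃ A : (i : Fin n) → Set (X (t i)), (∀ i, A i ∈ R (t i)) ∧
      C = ⋂ i : Fin n, (fun x : ∀ j, X j => x (t i)) ⁻¹' A i}

lemma cast_mem_ring' {X : ℕ → Type*} (R : ∀ j, Set (Set (X j))) {a b : ℕ} (e : a = b)
    {A : Set (X a)} (h : A ∈ R a) : (e ▸ A) ∈ R b := by subst e; exact h

lemma cast_pre' {X : ℕ → Type*} {a b : ℕ} (e : a = b) (A : Set (X a)) :
    ((fun x : ∀ j, X j => x b) ⁻¹' (e ▸ A)) = (fun x : ∀ j, X j => x a) ⁻¹' A := by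
  subst e; rfl

lemma univ_mem_cylinderRing {X : ℕ → Type*} (R : ∀ j, Set (Set (X j))) :
    Set.univ ∈ cylinderRing R :=
  ⟨0, Fin.elim0, fun i => i.elim0, fun i => i.elim0, fun i => i.elim0,
    (Set.iInter_of_empty _).symm⟩

lemma coe_nnnorm_le_mnorm {Y : Type*} {K : Type*} [NormedField K] {Rj : Set (Set Y)}
    (μj : Set Y → K) {B : Set Y} (hB : B ∈ Rj) :
    (‖μj B‖₊ : ℝ≥0∞) ≤ mnorm Rj μj Set.univ :=
  le_iSup₂_of_le B ⟨hB, Set.subset_univ B⟩ le_rfl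

lemma mB_bound {X : ℕ → Type*} {K : Type*} [NontriviallyNormedField K]
    (R : ∀ j : ℕ, Set (Set (X j))) (μ : ∀ j : ℕ, Set (X j) → K)
    (huniv : ∀ j, Set.univ ∈ R j)
    (m : Set (∀ j, X j) → K)
    (hm : ∀ (n : ℕ) (t : Fin n → ℕ), Function.Injective t →
      ∀ A : (i : Fin n) → Set (X (t i)), (∀ i, A i ∈ R (t i)) →
        m (⋂ i : Fin n, (fun x : ∀ j, X j => x (t i)) ⁻¹' A i) = ∏ i, μ (t i) (A i))
    (B : Set (∀ j, X j)) (hB : B ∈ cylinderRing R) :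
    ∃ N0 : ℕ, ∀ N ≥ N0,
      (‖m B‖₊ : ℝ≥0∞) ≤ ∏ j ∈ Finset.range N, mnorm (R j) (μ j) Set.univ := by
  classical
  obtain ⟨n, t, ht, A, hA, rfl⟩ := hB
  refine ⟨(Finset.univ.sup fun l => t l) + 1, fun N hN => ?_⟩
  have hlt : ∀ l, t l < N := fun l =>
    lt_of_lt_of_le (Nat.lt_succ_of_le (Finset.le_sup (Finset.mem_univ l))) hN
  set A' : (i : Fin N) → Set (X i) := fun i =>
    if h : ∃ l, t l = (i : ℕ) then h.choose_spec ▸ A h.choose else Set.univ with hA'def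
  have hA' : ∀ i : Fin N, A' i ∈ R i := fun i => by
    by_cases h : ∃ l, t l = (i : ℕ)
    · simp only [hA'def, dif_pos h]; exact cast_mem_ring' R h.choose_spec (hA h.choose)
    · simp only [hA'def, dif_neg h]; exact huniv _
  have hset : (⋂ i : Fin N, (fun x : ∀ j, X j => x ((i : Fin N) : ℕ)) ⁻¹' A' i) =
      ⋂ l : Fin n, (fun x : ∀ j, X j => x (t l)) ⁻¹' A l := by
    ext x
    simp only [Set.mem_iInter, Set.mem_preimage]
    constructor
    · intro H l
      have h : ∃ l', t l' = ((⟨t l, hlt l⟩ : Fin N) : ℕ) := ⟨l, rfl⟩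
      have hx := H ⟨t l, hlt l⟩
      simp only [hA'def, dif_pos h] at hx
      have hx' : x ∈ (fun x : ∀ j, X j => x (t h.choose)) ⁻¹' A h.choose := by
        rw [← cast_pre' h.choose_spec (A h.choose)]; exact hx
      have hl : h.choose = l := ht h.choose_spec
      rw [hl] at hx'
      exact hx'
    · intro H i
      by_cases h : ∃ l, t l = (i : ℕ)
      · simp only [hA'def, dif_pos h]
        have hx : x ∈ (fun x : ∀ j, X j => x ((i : ℕ))) ⁻¹' (h.choose_spec ▸ A h.choose) := by
          rw [cast_pre' h.choose_spec (A h.choose)]; exact H h.choose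
        exact hx
      · simp only [hA'def, dif_neg h]; trivial
  have hval : m (⋂ l : Fin n, (fun x : ∀ j, X j => x (t l)) ⁻¹' A l)
      = ∏ i : Fin N, μ (i : ℕ) (A' i) := by
    rw [← hset]
    exact hm N (fun i => (i : ℕ)) (fun a b hab => Fin.val_injective hab) A' hA'
  calc (‖m (⋂ l : Fin n, (fun x : ∀ j, X j => x (t l)) ⁻¹' A l)‖₊ : ℝ≥0∞)
      = ∏ i : Fin N, (‖μ (i : ℕ) (A' i)‖₊ : ℝ≥0∞) := by
        rw [hval, nnnorm_prod, ENNReal.coe_finset_prod]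
    _ ≤ ∏ i : Fin N, mnorm (R (i : ℕ)) (μ (i : ℕ)) Set.univ :=
        Finset.prod_le_prod' fun i _ => coe_nnnorm_le_mnorm (μ (i : ℕ)) (hA' i)
    _ = ∏ j ∈ Finset.range N, mnorm (R j) (μ j) Set.univ :=
        Fin.prod_univ_eq_prod_range (fun j => mnorm (R j) (μ j) Set.univ) N

lemma prod_sup_le {X : ℕ → Type*} {K : Type*} [NontriviallyNormedField K]
    (R : ∀ j : ℕ, Set (Set (X j))) (μ : ∀ j : ℕ, Set (X j) → K)
    (huniv : ∀ j, Set.univ ∈ R j) (n : ℕ) :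
    ∏ j ∈ Finset.range n, mnorm (R j) (μ j) Set.univ ≤
      ⨆ (A : (j : Fin n) → Set (X j)) (_ : ∀ j : Fin n, A j ∈ R (j : ℕ)),
        ∏ j : Fin n, (‖μ (j : ℕ) (A j)‖₊ : ℝ≥0∞) := by
  induction n with
  | zero =>
    refine le_trans ?_ (le_iSup₂_of_le (fun j => j.elim0) (fun j => j.elim0) le_rfl)
    simp
  | succ n ih =>
    rw [Finset.prod_range_succ]
    refine le_trans (mul_le_mul_left ih _) ?_
    rw [ENNReal.iSup_mul]
    refine iSup_le fun A => ?_
    rw [ENNReal.iSup_mul]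
    refine iSup_le fun hA => ?_
    rw [mnorm, ENNReal.mul_iSup]
    refine iSup_le fun B => ?_
    rw [ENNReal.mul_iSup]
    refine iSup_le fun hB => ?_
    refine le_iSup₂_of_le (Fin.snoc A B) ?_ ?_
    · intro j
      refine Fin.lastCases ?_ ?_ j
      · simpa [Fin.snoc_last] using hB.1
      · intro i; simpa [Fin.snoc_castSucc] using hA i
    · rw [Fin.prod_univ_castSucc]
      simp [Fin.snoc_castSucc, Fin.snoc_last]

/-- for a sequence of bounded `K`-valued measure spaces and the product
cylindrical distribution `m` on the ring of cylinder sets, if `∏_{j=1}^∞ ‖X_j‖_{μ_j} = 0`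
then `N_m(x) = 0` for every `x` (so `sup_x N_m(x) = 0`); and if
`∏_{j=1}^∞ ‖X_j‖_{μ_j} = ∞` then `sup_{A ∈ R} ‖A‖_m = ∞`, i.e. `m` is unbounded. -/
theorem product_degenerate_cases {X : ℕ → Type*} {K : Type*}
    [NontriviallyNormedField K] [IsUltrametricDist K] [CompleteSpace K]
    (R : ∀ j : ℕ, Set (Set (X j))) (μ : ∀ j : ℕ, Set (X j) → K)
    (hring : ∀ j, IsCoveringRing (R j)) (huniv : ∀ j, Set.univ ∈ R j)
    (hmeas : ∀ j, IsMeasure (R j) (μ j))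
    (m : Set (∀ j, X j) → K)
    (hm : ∀ (n : ℕ) (t : Fin n → ℕ), Function.Injective t →
      ∀ A : (i : Fin n) → Set (X (t i)), (∀ i, A i ∈ R (t i)) →
        m (⋂ i : Fin n, (fun x : ∀ j, X j => x (t i)) ⁻¹' A i) = ∏ i, μ (t i) (A i)) :
    (Tendsto (fun n : ℕ => ∏ j ∈ Finset.range n, mnorm (R j) (μ j) Set.univ)
        atTop (nhds 0) →
      (∀ x : ∀ j, X j, Nmu (cylinderRing R) m x = 0) ∧
        (⨆ x : ∀ j, X j, Nmu (cylinderRing R) m x) = 0) ∧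
    (Tendsto (fun n : ℕ => ∏ j ∈ Finset.range n, mnorm (R j) (μ j) Set.univ)
        atTop (nhds ⊤) →
      (⨆ (A : Set (∀ j, X j)) (_ : A ∈ cylinderRing R),
        mnorm (cylinderRing R) m A) = ⊤) := by
  constructor
  · intro h1
    have hzero : ∀ B ∈ cylinderRing R, m B = 0 := by
      intro B hB
      obtain ⟨N0, hN⟩ := mB_bound R μ huniv m hm B hB
      have hle : (‖m B‖₊ : ℝ≥0∞) ≤ 0 :=
        ge_of_tendsto h1 ((Filter.eventually_ge_atTop N0).mono hN)
      simpa using hle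
    have hmn : ∀ x : ∀ j, X j, Nmu (cylinderRing R) m x = 0 := by
      intro x
      refine le_antisymm ?_ zero_le
      refine le_trans (iInf₂_le Set.univ ⟨univ_mem_cylinderRing R, Set.mem_univ x⟩) ?_
      refine iSup₂_le fun B hB => ?_
      rw [hzero B hB.1]
      simp
    exact ⟨hmn, by simp [hmn]⟩
  · intro h2
    have key : ∀ n : ℕ, (∏ j ∈ Finset.range n, mnorm (R j) (μ j) Set.univ) ≤
        ⨆ (A : Set (∀ j, X j)) (_ : A ∈ cylinderRing R), mnorm (cylinderRing R) m A := by
      intro n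
      refine le_trans (prod_sup_le R μ huniv n) ?_
      refine iSup₂_le fun A hA => ?_
      have hmem : (⋂ i : Fin n, (fun x : ∀ j, X j => x ((i : Fin n) : ℕ)) ⁻¹' A i)
          ∈ cylinderRing R :=
        ⟨n, fun i => (i : ℕ), fun a b hab => Fin.val_injective hab, A, hA, rfl⟩
      have hv := hm n (fun i => (i : ℕ)) (fun a b hab => Fin.val_injective hab) A hA
      refine le_iSup₂_of_le _ hmem ?_
      refine le_iSup₂_of_le _ ⟨hmem, subset_rfl⟩ ?_
      rw [hv, nnnorm_prod, ENNReal.coe_finset_prod]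
    exact top_unique (le_of_tendsto h2 (Filter.Eventually.of_forall key))

end NonArch
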